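/- (Derivation of the weak formulation) Suppose β is positive and C¹ on [a,α] and on [α,b], w ∈ C([a,b]) with w ≥ 0, λ > 0, and f ∈ C([a,b]). Let p be given by C² functions p₁ on [a,α] and p₂ on [α,b] with p(a) = p(b) = 0, satisfying −(β p')' + w p = f on (a,α) and on (α,b), together with the jump conditions β(α⁺)p₂'(α) = β(α⁻)p₁'(α) (zero flux jump) and p₂(α) − p₁(α) = λ β(α⁻) p₁'(α). Then for every q that is piecewise C¹ on [a,α] and [α,b] with q(a) = q(b) = 0 one has ∫_a^α β p' q' dx + ∫_α^b β p' q' dx + ∫_a^b w p q dx + ([p]_α [q]_α)/λ = ∫_a^b f q dx, where [s]_α denotes the jump s(α⁺) − s(α⁻). -/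

import Mathlib

open Set intervalIntegral

/-- Derivation of the weak formulation: a strong solution `p`
(given by `C²` pieces `p₁` on `[a,α]` and `p₂` on `[α,b]`) of the interface
two-point boundary value problem `-(βp')' + wp = f`, with zero boundary values,
zero flux jump `β(α⁺)p₂'(α) = β(α⁻)p₁'(α)` and implicit interface condition
`[p]_α = λ β(α⁻) p₁'(α)`, satisfies `a(p,q) = (f,q)` for every piecewise `C¹`
test function `q` vanishing at `a` and `b`, where
`a(p,q) = ∫ β p' q' + ∫ w p q + [p]_α [q]_α / λ`. -/
theorem weak_formulation_derivation
    (a b α lam : ℝ) (hab : a < b) (hα : α ∈ Ioo a b) (hlam : 0 < lam)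
    (β₁ β₂ w f p₁ p₂ : ℝ → ℝ)
    -- β is positive and C¹ on [a,α] and on [α,b]
    (hβ₁ : ContDiff ℝ 1 β₁) (hβ₂ : ContDiff ℝ 1 β₂)
    (hβ₁pos : ∀ t ∈ Icc a α, 0 < β₁ t) (hβ₂pos : ∀ t ∈ Icc α b, 0 < β₂ t)
    -- w and f
    (hw : ContinuousOn w (Icc a b)) (hw0 : ∀ t ∈ Icc a b, 0 ≤ w t)
    (hf : ContinuousOn f (Icc a b))
    -- p is piecewise C² with zero boundary values
    (hp₁ : ContDiff ℝ 2 p₁) (hp₂ : ContDiff ℝ 2 p₂)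
    (hpa : p₁ a = 0) (hpb : p₂ b = 0)
    -- the differential equation -(βp')' + wp = f on (a,α) and on (α,b)
    (hode₁ : ∀ t ∈ Ioo a α,
        -deriv (fun s => β₁ s * deriv p₁ s) t + w t * p₁ t = f t)
    (hode₂ : ∀ t ∈ Ioo α b,
        -deriv (fun s => β₂ s * deriv p₂ s) t + w t * p₂ t = f t)
    -- the jump conditions: zero flux jump and implicit interface condition
    (hflux : β₂ α * deriv p₂ α = β₁ α * deriv p₁ α)
    (hjump : p₂ α - p₁ α = lam * (β₁ α * deriv p₁ α)) :
    -- conclusion: the weak formulation holds for all piecewise C¹ test functions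
    ∀ q₁ q₂ : ℝ → ℝ, ContDiff ℝ 1 q₁ → ContDiff ℝ 1 q₂ →
      q₁ a = 0 → q₂ b = 0 →
      (∫ t in a..α, β₁ t * deriv p₁ t * deriv q₁ t) +
        (∫ t in α..b, β₂ t * deriv p₂ t * deriv q₂ t) +
        (∫ t in a..b, w t * (if t < α then p₁ t * q₁ t else p₂ t * q₂ t)) +
        (p₂ α - p₁ α) * (q₂ α - q₁ α) / lam =
      ∫ t in a..b, f t * (if t < α then q₁ t else q₂ t) := by

  intro q₁ q₂ hq₁ hq₂ hq₁a hq₂b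
  obtain ⟨haα, hαb⟩ := hα
  have haα' : a ≤ α := haα.le
  have hαb' : α ≤ b := hαb.le
  have hne : ∀ᵐ t : ℝ, t ≠ α := by
    rw [MeasureTheory.ae_iff]
    simpa using Real.volume_singleton (x := α)
  have hneb : ∀ᵐ t : ℝ, t ≠ b := by
    rw [MeasureTheory.ae_iff]
    simpa using Real.volume_singleton (x := b)
  -- regularity
  have hdp₁ : ContDiff ℝ 1 (deriv p₁) := by
    have h2 : ContDiff ℝ ((1:ℕ) + 1) p₁ := by exact_mod_cast hp₁
    exact (contDiff_succ_iff_deriv.mp h2).2.2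
  have hdp₂ : ContDiff ℝ 1 (deriv p₂) := by
    have h2 : ContDiff ℝ ((1:ℕ) + 1) p₂ := by exact_mod_cast hp₂
    exact (contDiff_succ_iff_deriv.mp h2).2.2
  have hg₁ : ContDiff ℝ 1 (fun t => β₁ t * deriv p₁ t) := hβ₁.mul hdp₁
  have hg₂ : ContDiff ℝ 1 (fun t => β₂ t * deriv p₂ t) := hβ₂.mul hdp₂
  have hcg₁' : Continuous (deriv (fun s => β₁ s * deriv p₁ s)) := hg₁.continuous_deriv le_rfl
  have hcg₂' : Continuous (deriv (fun s => β₂ s * deriv p₂ s)) := hg₂.continuous_deriv le_rfl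
  have hcq₁' : Continuous (deriv q₁) := hq₁.continuous_deriv le_rfl
  have hcq₂' : Continuous (deriv q₂) := hq₂.continuous_deriv le_rfl
  -- integrability
  have intA₁ : IntervalIntegrable (fun t => deriv (fun s => β₁ s * deriv p₁ s) t * q₁ t)
      MeasureTheory.volume a α := (hcg₁'.mul hq₁.continuous).intervalIntegrable a α
  have intA₂ : IntervalIntegrable (fun t => deriv (fun s => β₂ s * deriv p₂ s) t * q₂ t)
      MeasureTheory.volume α b := (hcg₂'.mul hq₂.continuous).intervalIntegrable α b
  have intB₁ : IntervalIntegrable (fun t => w t * (p₁ t * q₁ t)) MeasureTheory.volume a α := by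
    apply ContinuousOn.intervalIntegrable
    rw [uIcc_of_le haα']
    exact (hw.mono (Icc_subset_Icc le_rfl hαb')).mul
      ((hp₁.continuous.mul hq₁.continuous).continuousOn)
  have intB₂ : IntervalIntegrable (fun t => w t * (p₂ t * q₂ t)) MeasureTheory.volume α b := by
    apply ContinuousOn.intervalIntegrable
    rw [uIcc_of_le hαb']
    exact (hw.mono (Icc_subset_Icc haα' le_rfl)).mul
      ((hp₂.continuous.mul hq₂.continuous).continuousOn)
  have intF₁ : IntervalIntegrable (fun t => f t * q₁ t) MeasureTheory.volume a α := by
    apply ContinuousOn.intervalIntegrable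
    rw [uIcc_of_le haα']
    exact (hf.mono (Icc_subset_Icc le_rfl hαb')).mul hq₁.continuous.continuousOn
  have intF₂ : IntervalIntegrable (fun t => f t * q₂ t) MeasureTheory.volume α b := by
    apply ContinuousOn.intervalIntegrable
    rw [uIcc_of_le hαb']
    exact (hf.mono (Icc_subset_Icc haα' le_rfl)).mul hq₂.continuous.continuousOn
  -- integrability of the piecewise integrands
  have intPW₁ : IntervalIntegrable
      (fun t => w t * (if t < α then p₁ t * q₁ t else p₂ t * q₂ t))
      MeasureTheory.volume a α := by
    rw [intervalIntegrable_iff, uIoc_of_le haα'] at intB₁ ⊢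
    apply intB₁.congr
    filter_upwards [MeasureTheory.ae_restrict_mem measurableSet_Ioc,
      MeasureTheory.ae_restrict_of_ae hne] with t htmem htne
    rw [if_pos (lt_of_le_of_ne htmem.2 htne)]
  have intPW₂ : IntervalIntegrable
      (fun t => w t * (if t < α then p₁ t * q₁ t else p₂ t * q₂ t))
      MeasureTheory.volume α b := by
    rw [intervalIntegrable_iff, uIoc_of_le hαb'] at intB₂ ⊢
    apply intB₂.congr
    filter_upwards [MeasureTheory.ae_restrict_mem measurableSet_Ioc] with t htmem
    rw [if_neg (not_lt.mpr htmem.1.le)]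
  have intPF₁ : IntervalIntegrable
      (fun t => f t * (if t < α then q₁ t else q₂ t)) MeasureTheory.volume a α := by
    rw [intervalIntegrable_iff, uIoc_of_le haα'] at intF₁ ⊢
    apply intF₁.congr
    filter_upwards [MeasureTheory.ae_restrict_mem measurableSet_Ioc,
      MeasureTheory.ae_restrict_of_ae hne] with t htmem htne
    rw [if_pos (lt_of_le_of_ne htmem.2 htne)]
  have intPF₂ : IntervalIntegrable
      (fun t => f t * (if t < α then q₁ t else q₂ t)) MeasureTheory.volume α b := by
    rw [intervalIntegrable_iff, uIoc_of_le hαb'] at intF₂ ⊢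
    apply intF₂.congr
    filter_upwards [MeasureTheory.ae_restrict_mem measurableSet_Ioc] with t htmem
    rw [if_neg (not_lt.mpr htmem.1.le)]
  -- integration by parts on each piece
  have ibp₁ : (∫ t in a..α, β₁ t * deriv p₁ t * deriv q₁ t)
      = β₁ α * deriv p₁ α * q₁ α
        - ∫ t in a..α, deriv (fun s => β₁ s * deriv p₁ s) t * q₁ t := by
    have h := intervalIntegral.integral_mul_deriv_eq_deriv_mul
      (u := fun t => β₁ t * deriv p₁ t) (u' := deriv (fun s => β₁ s * deriv p₁ s))
      (v := q₁) (v' := deriv q₁)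
      (fun x _ => ((hg₁.differentiable one_ne_zero) x).hasDerivAt)
      (fun x _ => ((hq₁.differentiable one_ne_zero) x).hasDerivAt)
      (hcg₁'.intervalIntegrable a α) (hcq₁'.intervalIntegrable a α)
    simpa [hq₁a] using h
  have ibp₂ : (∫ t in α..b, β₂ t * deriv p₂ t * deriv q₂ t)
      = -(β₂ α * deriv p₂ α * q₂ α)
        - ∫ t in α..b, deriv (fun s => β₂ s * deriv p₂ s) t * q₂ t := by
    have h := intervalIntegral.integral_mul_deriv_eq_deriv_mul
      (u := fun t => β₂ t * deriv p₂ t) (u' := deriv (fun s => β₂ s * deriv p₂ s))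
      (v := q₂) (v' := deriv q₂)
      (fun x _ => ((hg₂.differentiable one_ne_zero) x).hasDerivAt)
      (fun x _ => ((hq₂.differentiable one_ne_zero) x).hasDerivAt)
      (hcg₂'.intervalIntegrable α b) (hcq₂'.intervalIntegrable α b)
    simpa [hq₂b] using h
  -- use the ODE on each piece
  have hfq₁ : (∫ t in a..α, f t * q₁ t)
      = -(∫ t in a..α, deriv (fun s => β₁ s * deriv p₁ s) t * q₁ t)
        + ∫ t in a..α, w t * (p₁ t * q₁ t) := by
    have h1 : (∫ t in a..α, f t * q₁ t)
        = ∫ t in a..α, (-(deriv (fun s => β₁ s * deriv p₁ s) t * q₁ t)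
            + w t * (p₁ t * q₁ t)) := by
      apply intervalIntegral.integral_congr_ae
      filter_upwards [hne] with t ht hmem
      rw [uIoc_of_le haα'] at hmem
      have h := hode₁ t ⟨hmem.1, lt_of_le_of_ne hmem.2 ht⟩
      rw [← h]; ring
    have hInt : IntervalIntegrable
        (fun t => -(deriv (fun s => β₁ s * deriv p₁ s) t * q₁ t)) MeasureTheory.volume a α :=
      intA₁.neg
    rw [h1, intervalIntegral.integral_add hInt intB₁, intervalIntegral.integral_neg]
  have hfq₂ : (∫ t in α..b, f t * q₂ t)
      = -(∫ t in α..b, deriv (fun s => β₂ s * deriv p₂ s) t * q₂ t)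
        + ∫ t in α..b, w t * (p₂ t * q₂ t) := by
    have h1 : (∫ t in α..b, f t * q₂ t)
        = ∫ t in α..b, (-(deriv (fun s => β₂ s * deriv p₂ s) t * q₂ t)
            + w t * (p₂ t * q₂ t)) := by
      apply intervalIntegral.integral_congr_ae
      filter_upwards [hneb] with t ht hmem
      rw [uIoc_of_le hαb'] at hmem
      have h := hode₂ t ⟨hmem.1, lt_of_le_of_ne hmem.2 ht⟩
      rw [← h]; ring
    have hInt : IntervalIntegrable
        (fun t => -(deriv (fun s => β₂ s * deriv p₂ s) t * q₂ t)) MeasureTheory.volume α b :=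
      intA₂.neg
    rw [h1, intervalIntegral.integral_add hInt intB₂, intervalIntegral.integral_neg]
  -- split the piecewise integrals at α
  have splitW : (∫ t in a..b, w t * (if t < α then p₁ t * q₁ t else p₂ t * q₂ t))
      = (∫ t in a..α, w t * (p₁ t * q₁ t)) + ∫ t in α..b, w t * (p₂ t * q₂ t) := by
    rw [← intervalIntegral.integral_add_adjacent_intervals intPW₁ intPW₂]
    congr 1
    · apply intervalIntegral.integral_congr_ae
      filter_upwards [hne] with t ht hmem
      rw [uIoc_of_le haα'] at hmem
      rw [if_pos (lt_of_le_of_ne hmem.2 ht)]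
    · apply intervalIntegral.integral_congr
      intro t hmem
      rw [uIcc_of_le hαb'] at hmem
      simp only [not_lt.mpr hmem.1, if_false]
  have splitF : (∫ t in a..b, f t * (if t < α then q₁ t else q₂ t))
      = (∫ t in a..α, f t * q₁ t) + ∫ t in α..b, f t * q₂ t := by
    rw [← intervalIntegral.integral_add_adjacent_intervals intPF₁ intPF₂]
    congr 1
    · apply intervalIntegral.integral_congr_ae
      filter_upwards [hne] with t ht hmem
      rw [uIoc_of_le haα'] at hmem
      rw [if_pos (lt_of_le_of_ne hmem.2 ht)]
    · apply intervalIntegral.integral_congr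
      intro t hmem
      rw [uIcc_of_le hαb'] at hmem
      simp only [not_lt.mpr hmem.1, if_false]
  rw [ibp₁, ibp₂, splitW, splitF, hfq₁, hfq₂, hjump, hflux]
  field_simp
  ring
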